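/- arXiv:1703.09687 — 5 statements merged into one kernel-verified Lean document; each statement's English description precedes it below -/
import Mathlib

section
/- For every k ≥ 3 and every r ≥ 1, there is a coloring of the edges of the complete k-uniform hypergraph on r + 3k − 4 vertices with r colors containing no monochromatic copy of the loose k-path of length three; equivalently, R(P^{(k)}; r) ≥ r + 3k − 3. -/
/-- Auxiliary coloring: color an edge by (the value of) a vertex of value `< r-1`
it contains, if any; otherwise it gets the last color `r-1`. -/
lemma exists_special_coloring (N r : ℕ) (hr : 1 ≤ r) :
    ∃ χ : Finset (Fin N) → Fin r,
      (∀ e, (χ e).val < r - 1 → ∃ v ∈ e, v.val = (χ e).val) ∧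
      (∀ e, (χ e).val = r - 1 → ∀ v ∈ e, r - 1 ≤ v.val) := by
  refine ⟨fun e =>
    if h : ∃ i : Fin N, i.val < r - 1 ∧ i ∈ e then
      ⟨h.choose.val, lt_of_lt_of_le h.choose_spec.1 (Nat.sub_le r 1)⟩
    else ⟨r - 1, Nat.sub_lt hr Nat.one_pos⟩, ?_, ?_⟩
  · intro e
    by_cases h : ∃ i : Fin N, i.val < r - 1 ∧ i ∈ e
    · simp only [dif_pos h]
      intro _
      exact ⟨h.choose, h.choose_spec.2, rfl⟩
    · simp only [dif_neg h]
      intro hlt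
      omega
  · intro e
    by_cases h : ∃ i : Fin N, i.val < r - 1 ∧ i ∈ e
    · simp only [dif_pos h]
      intro heq
      exact absurd heq (Nat.ne_of_lt h.choose_spec.1)
    · simp only [dif_neg h]
      intro _ v hv
      by_contra hlt
      exact h ⟨v, by omega, hv⟩

/-- For every k ≥ 3 and r ≥ 1 there is an r-coloring of the edges
(k-element subsets) of the complete k-uniform hypergraph on r + 3k − 4 vertices
with no monochromatic loose k-path of length three; equivalently
R(P^{(k)}; r) ≥ r + 3k − 3. -/
theorem multicolor_ramsey_loose_path_lower_bound :
    ∀ k : ℕ, 3 ≤ k → ∀ r : ℕ, 1 ≤ r →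
      ∃ χ : Finset (Fin (r + 3 * k - 4)) → Fin r,
        ¬ ∃ e₁ e₂ e₃ : Finset (Fin (r + 3 * k - 4)),
            e₁.card = k ∧ e₂.card = k ∧ e₃.card = k ∧
            χ e₁ = χ e₂ ∧ χ e₂ = χ e₃ ∧
            (e₁ ∩ e₂).card = 1 ∧ (e₂ ∩ e₃).card = 1 ∧ e₁ ∩ e₃ = ∅ := by
  intro k hk r hr
  obtain ⟨χ, key1, key2⟩ := exists_special_coloring (r + 3 * k - 4) r hr
  refine ⟨χ, ?_⟩
  rintro ⟨e₁, e₂, e₃, h1, h2, h3, hc12, hc23, hi12, hi23, hi13⟩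
  rcases lt_or_eq_of_le (Nat.le_sub_one_of_lt (χ e₂).isLt) with hlt | heq
  · -- the common color is a "special" color: a common vertex in e₁ and e₃
    obtain ⟨v₁, hv₁, hval₁⟩ := key1 e₁ (by rw [hc12]; exact hlt)
    obtain ⟨v₃, hv₃, hval₃⟩ := key1 e₃ (by rw [← hc23]; exact hlt)
    have : v₁ = v₃ := Fin.val_injective (by rw [hval₁, hval₃, hc12, hc23])
    have : v₁ ∈ e₁ ∩ e₃ := Finset.mem_inter.mpr ⟨hv₁, this ▸ hv₃⟩
    rw [hi13] at this
    exact absurd this (Finset.notMem_empty _)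
  · -- the last color: all vertices have value ≥ r - 1, only 3k - 3 of those
    have hall : ∀ v ∈ e₁ ∪ e₂ ∪ e₃, r - 1 ≤ v.val := by
      intro v hv
      rcases Finset.mem_union.mp hv with hv | hv
      · rcases Finset.mem_union.mp hv with hv | hv
        · exact key2 e₁ (by rw [hc12]; exact heq) v hv
        · exact key2 e₂ heq v hv
      · exact key2 e₃ (by rw [← hc23]; exact heq) v hv
    -- card of the union is 3k - 2
    have hu12 : (e₁ ∪ e₂).card = 2 * k - 1 := by
      have := Finset.card_union_add_card_inter e₁ e₂
      omega
    have hint : (e₁ ∪ e₂) ∩ e₃ = e₂ ∩ e₃ := by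
      rw [Finset.union_inter_distrib_right, hi13, Finset.empty_union]
    have hu : (e₁ ∪ e₂ ∪ e₃).card = 3 * k - 2 := by
      have := Finset.card_union_add_card_inter (e₁ ∪ e₂) e₃
      rw [hint, hi23, hu12, h3] at this
      omega
    -- but it injects into Fin (3k - 3)
    have hmap : (e₁ ∪ e₂ ∪ e₃).card ≤ 3 * k - 3 := by
      have hcard : (Finset.univ : Finset (Fin (3 * k - 3))).card = 3 * k - 3 :=
        Finset.card_fin _
      rw [← hcard]
      refine Finset.card_le_card_of_injOn
        (fun v => ⟨v.val - (r - 1), by have := v.isLt; omega⟩)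
        (fun v _ => Finset.mem_univ _) ?_
      intro v hv w hw hvw
      have h1 := hall v hv
      have h2 := hall w hw
      have : v.val - (r - 1) = w.val - (r - 1) := congrArg Fin.val hvw
      exact Fin.val_injective (by omega)
    omega
end

section
/- Every bipartite graph B with vertex classes V₁ and V₂ and at least one edge contains a nonempty subgraph G such that every vertex v of G lying in V₁ satisfies deg_G(v) ≥ |B|/(2|V₁|) and every vertex v of G lying in V₂ satisfies deg_G(v) ≥ |B|/(2|V₂|). -/
/-- Every bipartite graph B with vertex classes V₁ and V₂ (modelled as a
set of edges between V₁ and V₂) having at least one edge contains a nonempty subgraph G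
such that every vertex of G lying in V₁ has degree in G at least |B|/(2|V₁|) and every
vertex of G lying in V₂ has degree in G at least |B|/(2|V₂|). -/
theorem exists_bipartite_subgraph_min_degree {V₁ V₂ : Type*}
    [Fintype V₁] [Fintype V₂] [DecidableEq V₁] [DecidableEq V₂]
    [Nonempty V₁] [Nonempty V₂]
    (B : Finset (V₁ × V₂)) (hne : B.Nonempty) :
    ∃ G ⊆ B, G.Nonempty ∧
      (∀ v : V₁, (∃ p ∈ G, p.1 = v) →
        ((G.filter (fun p => p.1 = v)).card : ℝ) ≥
          (B.card : ℝ) / (2 * (Fintype.card V₁ : ℝ))) ∧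
      (∀ w : V₂, (∃ p ∈ G, p.2 = w) →
        ((G.filter (fun p => p.2 = w)).card : ℝ) ≥
          (B.card : ℝ) / (2 * (Fintype.card V₂ : ℝ))) := by
  classical
  set n₁ : ℝ := (Fintype.card V₁ : ℝ) with hn₁
  set n₂ : ℝ := (Fintype.card V₂ : ℝ) with hn₂
  have hn₁pos : (0:ℝ) < n₁ := by
    rw [hn₁]; exact_mod_cast (Fintype.card_pos (α := V₁))
  have hn₂pos : (0:ℝ) < n₂ := by
    rw [hn₂]; exact_mod_cast (Fintype.card_pos (α := V₂))
  set c₁ : ℝ := (B.card : ℝ) / (2 * n₁) with hc₁def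
  set c₂ : ℝ := (B.card : ℝ) / (2 * n₂) with hc₂def
  have hc₁ : 0 ≤ c₁ := by positivity
  have hc₂ : 0 ≤ c₂ := by positivity
  have hc₁n : c₁ * n₁ = (B.card : ℝ) / 2 := by
    rw [hc₁def]; field_simp
  have hc₂n : c₂ * n₂ = (B.card : ℝ) / 2 := by
    rw [hc₂def]; field_simp
  set φ : Finset (V₁ × V₂) → ℝ := fun H =>
    (H.card : ℝ) - c₁ * ((H.image Prod.fst).card : ℝ)
      - c₂ * ((H.image Prod.snd).card : ℝ) with hφ
  -- φ B ≥ 0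
  have hφB : 0 ≤ φ B := by
    have h1 : ((B.image Prod.fst).card : ℝ) ≤ n₁ := by
      rw [hn₁]; exact_mod_cast Finset.card_le_univ _
    have h2 : ((B.image Prod.snd).card : ℝ) ≤ n₂ := by
      rw [hn₂]; exact_mod_cast Finset.card_le_univ _
    have h3 : c₁ * ((B.image Prod.fst).card : ℝ) ≤ c₁ * n₁ :=
      mul_le_mul_of_nonneg_left h1 hc₁
    have h4 : c₂ * ((B.image Prod.snd).card : ℝ) ≤ c₂ * n₂ :=
      mul_le_mul_of_nonneg_left h2 hc₂
    simp only [hφ]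
    linarith [hc₁n, hc₂n]
  -- choose a φ-maximizer
  obtain ⟨G₀, hG₀mem, hG₀max⟩ :=
    B.powerset.exists_max_image φ ⟨B, Finset.mem_powerset_self B⟩
  -- among φ-maximizers, choose one of maximal cardinality
  set T := B.powerset.filter (fun H => φ G₀ ≤ φ H) with hT
  have hTne : T.Nonempty := ⟨G₀, by simp [hT, hG₀mem]⟩
  obtain ⟨G, hGT, hGcard⟩ := T.exists_max_image (fun H => H.card) hTne
  have hGpow : G ∈ B.powerset := (Finset.mem_filter.mp hGT).1
  have hGB : G ⊆ B := Finset.mem_powerset.mp hGpow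
  have hGφ : φ G₀ ≤ φ G := (Finset.mem_filter.mp hGT).2
  have hGmax : ∀ H ∈ B.powerset, φ H ≤ φ G := fun H hH =>
    le_trans (hG₀max H hH) hGφ
  -- G is nonempty
  have hGne : G.Nonempty := by
    rw [Finset.nonempty_iff_ne_empty]
    intro hGe
    have hφG : φ G = 0 := by simp [hφ, hGe]
    have hBT : B ∈ T := by
      refine Finset.mem_filter.mpr ⟨Finset.mem_powerset_self B, ?_⟩
      have := hG₀max G hGpow
      linarith
    have := hGcard B hBT
    rw [hGe] at this
    simp at this
    exact hne.ne_empty this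
  refine ⟨G, hGB, hGne, ?_, ?_⟩
  · intro v hv
    by_contra hd
    push_neg at hd
    have hd' : ((G.filter (fun p => p.1 = v)).card : ℝ) < c₁ := hd
    set G' := G.filter (fun p => ¬ p.1 = v) with hG'
    have hsplit : (G.filter (fun p => p.1 = v)).card + G'.card = G.card :=
      Finset.card_filter_add_card_filter_not _
    have hva : v ∈ G.image Prod.fst := by
      obtain ⟨p, hp, hpv⟩ := hv
      exact Finset.mem_image.mpr ⟨p, hp, hpv⟩
    have himg1 : G'.image Prod.fst ⊆ (G.image Prod.fst).erase v := by
      intro x hx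
      obtain ⟨p, hp, hpx⟩ := Finset.mem_image.mp hx
      obtain ⟨hpG, hpv⟩ := Finset.mem_filter.mp hp
      exact Finset.mem_erase.mpr ⟨hpx ▸ hpv, Finset.mem_image.mpr ⟨p, hpG, hpx⟩⟩
    have h1 : (G'.image Prod.fst).card + 1 ≤ (G.image Prod.fst).card := by
      have := Finset.card_le_card himg1
      rw [Finset.card_erase_of_mem hva] at this
      have hpos : 1 ≤ (G.image Prod.fst).card := Finset.card_pos.mpr ⟨v, hva⟩
      omega
    have h1' : ((G'.image Prod.fst).card : ℝ) + 1 ≤ ((G.image Prod.fst).card : ℝ) := by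
      exact_mod_cast h1
    have h2 : ((G'.image Prod.snd).card : ℝ) ≤ ((G.image Prod.snd).card : ℝ) := by
      exact_mod_cast Finset.card_le_card
        (Finset.image_subset_image (Finset.filter_subset _ _))
    have h5 : c₁ * ((G'.image Prod.fst).card : ℝ) ≤
        c₁ * (((G.image Prod.fst).card : ℝ) - 1) :=
      mul_le_mul_of_nonneg_left (by linarith) hc₁
    have h6 : c₂ * ((G'.image Prod.snd).card : ℝ) ≤
        c₂ * ((G.image Prod.snd).card : ℝ) :=
      mul_le_mul_of_nonneg_left h2 hc₂
    have hcardR : (G'.card : ℝ) =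
        (G.card : ℝ) - ((G.filter (fun p => p.1 = v)).card : ℝ) := by
      have : ((G.filter (fun p => p.1 = v)).card : ℝ) + (G'.card : ℝ) = (G.card : ℝ) := by
        exact_mod_cast hsplit
      linarith
    have hG'pow : G' ∈ B.powerset :=
      Finset.mem_powerset.mpr ((Finset.filter_subset _ _).trans hGB)
    have hle := hGmax G' hG'pow
    simp only [hφ] at hle
    nlinarith
  · intro w hw
    by_contra hd
    push_neg at hd
    have hd' : ((G.filter (fun p => p.2 = w)).card : ℝ) < c₂ := hd
    set G' := G.filter (fun p => ¬ p.2 = w) with hG'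
    have hsplit : (G.filter (fun p => p.2 = w)).card + G'.card = G.card :=
      Finset.card_filter_add_card_filter_not _
    have hva : w ∈ G.image Prod.snd := by
      obtain ⟨p, hp, hpw⟩ := hw
      exact Finset.mem_image.mpr ⟨p, hp, hpw⟩
    have himg1 : G'.image Prod.snd ⊆ (G.image Prod.snd).erase w := by
      intro x hx
      obtain ⟨p, hp, hpx⟩ := Finset.mem_image.mp hx
      obtain ⟨hpG, hpw⟩ := Finset.mem_filter.mp hp
      exact Finset.mem_erase.mpr ⟨hpx ▸ hpw, Finset.mem_image.mpr ⟨p, hpG, hpx⟩⟩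
    have h1 : (G'.image Prod.snd).card + 1 ≤ (G.image Prod.snd).card := by
      have := Finset.card_le_card himg1
      rw [Finset.card_erase_of_mem hva] at this
      have hpos : 1 ≤ (G.image Prod.snd).card := Finset.card_pos.mpr ⟨w, hva⟩
      omega
    have h1' : ((G'.image Prod.snd).card : ℝ) + 1 ≤ ((G.image Prod.snd).card : ℝ) := by
      exact_mod_cast h1
    have h2 : ((G'.image Prod.fst).card : ℝ) ≤ ((G.image Prod.fst).card : ℝ) := by
      exact_mod_cast Finset.card_le_card
        (Finset.image_subset_image (Finset.filter_subset _ _))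
    have h5 : c₂ * ((G'.image Prod.snd).card : ℝ) ≤
        c₂ * (((G.image Prod.snd).card : ℝ) - 1) :=
      mul_le_mul_of_nonneg_left (by linarith) hc₂
    have h6 : c₁ * ((G'.image Prod.fst).card : ℝ) ≤
        c₁ * ((G.image Prod.fst).card : ℝ) :=
      mul_le_mul_of_nonneg_left h2 hc₁
    have hcardR : (G'.card : ℝ) =
        (G.card : ℝ) - ((G.filter (fun p => p.2 = w)).card : ℝ) := by
      have : ((G.filter (fun p => p.2 = w)).card : ℝ) + (G'.card : ℝ) = (G.card : ℝ) := by
        exact_mod_cast hsplit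
      linarith
    have hG'pow : G' ∈ B.powerset :=
      Finset.mem_powerset.mpr ((Finset.filter_subset _ _).trans hGB)
    have hle := hGmax G' hG'pow
    simp only [hφ] at hle
    nlinarith
end

section
/- For all k ≥ 3 and b > 0 there exists n₀ such that for all n ≥ n₀ the following holds. Let H be a P^{(k)}-free k-uniform hypergraph on n vertices, let v be a vertex with deg_H(v) ≥ b·C(n−1, k−1), and let F be a sub-hypergraph of the link H(v) such that every vertex of V(F) has degree in F at least (b/(k−1)) · C(n−2, k−2). Then for every edge e of H, either v ∈ e or e ∩ V(F) = ∅. -/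
open Finset in
lemma aux_card_filter_superset_le {n : ℕ} (A : Finset (Finset (Fin n))) (m : ℕ)
    (hA : ∀ e ∈ A, e.card = m) (t : Finset (Fin n)) :
    (A.filter (fun e => t ⊆ e)).card ≤ Nat.choose (n - t.card) (m - t.card) := by
  classical
  have h : (A.filter (fun e => t ⊆ e)).card ≤
      (Finset.powersetCard (m - t.card) (Finset.univ \ t)).card := by
    apply Finset.card_le_card_of_injOn (fun e => e \ t)
    · intro e he
      simp only [Finset.mem_coe, Finset.mem_filter] at he
      simp only [Finset.mem_coe, Finset.mem_powersetCard]
      refine ⟨fun x hx => ?_, ?_⟩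
      · simp only [Finset.mem_sdiff, Finset.mem_univ, true_and] at hx ⊢
        exact hx.2
      · rw [Finset.card_sdiff_of_subset he.2, hA e he.1]
    · intro e₁ h₁ e₂ h₂ h
      simp only [Finset.mem_coe, Finset.mem_filter] at h₁ h₂
      have h' : e₁ \ t = e₂ \ t := h
      rw [← Finset.sdiff_union_of_subset h₁.2, h', Finset.sdiff_union_of_subset h₂.2]
  rw [Finset.card_powersetCard, Finset.card_sdiff_of_subset (Finset.subset_univ t),
    Finset.card_univ, Fintype.card_fin] at h
  exact h


set_option maxHeartbeats 1000000 in
/-- For all k ≥ 3 and b > 0 there exists n₀ such that for all n ≥ n₀: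
let H be a P^{(k)}-free k-uniform hypergraph on n vertices, v a vertex with
deg_H(v) ≥ b·C(n−1, k−1), and F a sub-hypergraph of the link H(v) (each edge f of F
satisfies v ∉ f and {v} ∪ f ∈ H) in which every covered vertex has degree at least
(b/(k−1)) · C(n−2, k−2). Then every edge e of H satisfies v ∈ e or e ∩ V(F) = ∅. -/
theorem loose_path_free_edges_avoid_link_core :
    ∀ k : ℕ, 3 ≤ k → ∀ b : ℝ, 0 < b → ∃ n₀ : ℕ, ∀ n : ℕ, n₀ ≤ n →
      ∀ H : Finset (Finset (Fin n)),
        (∀ e ∈ H, e.card = k) →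
        (¬ ∃ e₁ ∈ H, ∃ e₂ ∈ H, ∃ e₃ ∈ H,
            (e₁ ∩ e₂).card = 1 ∧ (e₂ ∩ e₃).card = 1 ∧ e₁ ∩ e₃ = ∅) →
        ∀ v : Fin n,
          ((H.filter (fun e => v ∈ e)).card : ℝ) ≥
            b * (Nat.choose (n - 1) (k - 1) : ℝ) →
          ∀ F : Finset (Finset (Fin n)),
            (∀ f ∈ F, v ∉ f ∧ insert v f ∈ H) →
            (∀ w ∈ F.biUnion id,
              ((F.filter (fun f => w ∈ f)).card : ℝ) ≥
                b / ((k : ℝ) - 1) * (Nat.choose (n - 2) (k - 2) : ℝ)) →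
            ∀ e ∈ H, v ∈ e ∨ e ∩ F.biUnion id = ∅ := by
  classical
  intro k hk b hb
  refine ⟨k + 1 + Nat.ceil (((k:ℝ)^3 + 2*(k:ℝ)^2)/b), ?_⟩
  intro n hn H hcard hP v hdeg F hF hFdeg e heH
  by_contra hcon
  push_neg at hcon
  obtain ⟨hve, hne⟩ := hcon
  -- basic numerics
  set C := Nat.ceil (((k:ℝ)^3 + 2*(k:ℝ)^2)/b) with hC
  have hnk : k + 1 ≤ n := by omega
  set d : ℕ := n - (k-1) with hd
  have hdC : C + 2 ≤ d := by omega
  have hkR : (3:ℝ) ≤ (k:ℝ) := by exact_mod_cast hk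
  have hbd : (k:ℝ)^3 + 2*(k:ℝ)^2 < b * (d:ℝ) := by
    have h1 : ((k:ℝ)^3 + 2*(k:ℝ)^2)/b ≤ (C:ℝ) := Nat.le_ceil _
    have h2 : (C:ℝ) + 2 ≤ (d:ℝ) := by exact_mod_cast hdC
    have h3 : b * (((k:ℝ)^3 + 2*(k:ℝ)^2)/b) = (k:ℝ)^3 + 2*(k:ℝ)^2 := by
      field_simp
    nlinarith
  have hdn : (d:ℝ) ≤ (n:ℝ) - 1 := by
    have : d ≤ n - 1 := by omega
    have h2 : ((n-1:ℕ):ℝ) = (n:ℝ) - 1 := by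
      have : 1 ≤ n := by omega
      push_cast [Nat.cast_sub this]; ring
    rw [← h2]; exact_mod_cast this
  set c1 := Nat.choose (n-1) (k-1) with hc1
  set c2 := Nat.choose (n-2) (k-2) with hc2
  set c3 := Nat.choose (n-2) (k-3) with hc3
  have hc2pos : 0 < c2 := Nat.choose_pos (by omega)
  have hc2posR : (0:ℝ) < (c2:ℝ) := by exact_mod_cast hc2pos
  have hdpos : (0:ℝ) < (d:ℝ) := by
    have : 0 < d := by omega
    exact_mod_cast this
  -- identity 1 : c2 * (k-2) = c3 * d  (in ℕ)
  have I1 : c2 * (k-2) = c3 * d := by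
    have := Nat.choose_succ_right_eq (n-2) (k-3)
    have h1 : k - 3 + 1 = k - 2 := by omega
    have h2 : n - 2 - (k - 3) = d := by omega
    rw [h1, h2] at this
    exact this
  -- identity 2 : (n-1) * c2 = c1 * (k-1)  (in ℕ)
  have I2 : (n-1) * c2 = c1 * (k-1) := by
    have := Nat.add_one_mul_choose_eq (n-2) (k-2)
    have h1 : n - 2 + 1 = n - 1 := by omega
    have h3 : k - 2 + 1 = k - 1 := by omega
    rw [h1, h3] at this
    exact this
  have hk1R : ((k-1:ℕ):ℝ) = (k:ℝ) - 1 := by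
    push_cast [Nat.cast_sub (by omega : 1 ≤ k)]; ring
  have hk2R : ((k-2:ℕ):ℝ) = (k:ℝ) - 2 := by
    push_cast [Nat.cast_sub (by omega : 2 ≤ k)]; ring
  have I1R : (c2:ℝ) * ((k:ℝ)-2) = (c3:ℝ) * (d:ℝ) := by
    rw [← hk2R]; exact_mod_cast I1
  have I2R : ((n:ℝ)-1) * (c2:ℝ) = (c1:ℝ) * ((k:ℝ)-1) := by
    have hn1 : ((n-1:ℕ):ℝ) = (n:ℝ) - 1 := by
      push_cast [Nat.cast_sub (by omega : 1 ≤ n)]; ring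
    rw [← hn1, ← hk1R]; exact_mod_cast I2
  -- every edge of F has card k-1
  have hFcard : ∀ f ∈ F, f.card = k - 1 := by
    intro f hf
    obtain ⟨hvf, hins⟩ := hF f hf
    have := hcard _ hins
    rw [Finset.card_insert_of_notMem hvf] at this
    omega
  -- get w in e ∩ V(F)
  obtain ⟨w, hw⟩ := hne
  rw [Finset.mem_inter] at hw
  obtain ⟨hwe, hwV⟩ := hw
  have hvw : v ≠ w := fun h => hve (h ▸ hwe)
  -- Step 1: find f ∈ F with w ∈ f and f ∩ e ⊆ {w}
  set Fw := F.filter (fun f => w ∈ f) with hFw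
  set Bad := Fw.filter (fun f => ∃ u ∈ e, u ≠ w ∧ u ∈ f) with hBad
  have hBadle : Bad.card ≤ (k-1) * c3 := by
    have hsub : Bad ⊆ (e.erase w).biUnion
        (fun u => F.filter (fun f => ({w, u} : Finset (Fin n)) ⊆ f)) := by
      intro f hf
      simp only [hBad, hFw, Finset.mem_filter] at hf
      obtain ⟨⟨hfF, hwf⟩, u, hue, huw, huf⟩ := hf
      refine Finset.mem_biUnion.2 ⟨u, Finset.mem_erase.2 ⟨huw, hue⟩, ?_⟩
      exact Finset.mem_filter.2 ⟨hfF, by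
        rw [Finset.insert_subset_iff, Finset.singleton_subset_iff]; exact ⟨hwf, huf⟩⟩
    calc Bad.card ≤ _ := Finset.card_le_card hsub
      _ ≤ ∑ u ∈ e.erase w, (F.filter (fun f => ({w, u} : Finset (Fin n)) ⊆ f)).card :=
        Finset.card_biUnion_le
      _ ≤ ∑ u ∈ e.erase w, c3 := by
        apply Finset.sum_le_sum
        intro u hu
        have huw : u ≠ w := (Finset.mem_erase.1 hu).1
        have := aux_card_filter_superset_le F (k-1) hFcard {w, u}
        rwa [Finset.card_pair (Ne.symm huw), show k - 1 - 2 = k - 3 by omega] at this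
      _ = (e.erase w).card * c3 := by rw [Finset.sum_const, smul_eq_mul]
      _ ≤ (k-1) * c3 := by
        apply Nat.mul_le_mul_right
        have := Finset.card_erase_of_mem hwe
        rw [this, hcard e heH]
  have hFwge : ((k:ℝ)-1) * (c3:ℝ) < (Fw.card : ℝ) := by
    have hdeg' := hFdeg w hwV
    have key : ((k:ℝ)-1) * (c3:ℝ) < b / ((k:ℝ)-1) * (c2:ℝ) := by
      rw [div_mul_eq_mul_div, lt_div_iff₀ (by linarith : (0:ℝ) < (k:ℝ)-1)]
      have step : ((k:ℝ)-1) * (c3:ℝ) * ((k:ℝ)-1) * (d:ℝ) < b * (c2:ℝ) * (d:ℝ) := by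
        have e1 : ((k:ℝ)-1) * (c3:ℝ) * ((k:ℝ)-1) * (d:ℝ)
            = ((k:ℝ)-1)^2 * ((c2:ℝ) * ((k:ℝ)-2)) := by rw [I1R]; ring
        rw [e1]
        nlinarith [hc2posR, hbd, hkR, hdpos]
      have := lt_of_mul_lt_mul_right step hdpos.le
      linarith
    calc ((k:ℝ)-1) * (c3:ℝ) < b / ((k:ℝ)-1) * (c2:ℝ) := key
      _ ≤ (Fw.card : ℝ) := hdeg'
  have hBadlt : Bad.card < Fw.card := by
    have h1 : (Bad.card : ℝ) ≤ ((k-1:ℕ) : ℝ) * (c3:ℝ) := by exact_mod_cast Nat.cast_le.2 hBadle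
    rw [hk1R] at h1
    have : (Bad.card : ℝ) < (Fw.card : ℝ) := lt_of_le_of_lt h1 hFwge
    exact_mod_cast this
  have hBadsub : Bad ⊆ Fw := Finset.filter_subset _ _
  have : (Fw \ Bad).Nonempty := by
    rw [← Finset.card_pos, Finset.card_sdiff_of_subset hBadsub]
    omega
  obtain ⟨f, hf⟩ := this
  rw [Finset.mem_sdiff] at hf
  obtain ⟨hfFw, hfBad⟩ := hf
  have hfF : f ∈ F := (Finset.mem_filter.1 hfFw).1
  have hwf : w ∈ f := (Finset.mem_filter.1 hfFw).2
  have hfe : ∀ u ∈ e, u ∈ f → u = w := by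
    intro u hue huf
    by_contra huw
    exact hfBad (Finset.mem_filter.2 ⟨hfFw, u, hue, huw, huf⟩)
  have hvf : v ∉ f := (hF f hfF).1
  -- Step 2: find e₁ ∈ H with v ∈ e₁ disjoint from e ∪ f
  set Hv := H.filter (fun g => v ∈ g) with hHv
  set Bad2 := Hv.filter (fun g => ∃ u ∈ e ∪ f, u ∈ g) with hBad2
  have hvef : v ∉ e ∪ f := by
    rw [Finset.mem_union]; rintro (h | h); exact hve h; exact hvf h
  have hBad2le : Bad2.card ≤ (2*k - 1) * c2 := by
    have hsub : Bad2 ⊆ (e ∪ f).biUnion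
        (fun u => H.filter (fun g => ({v, u} : Finset (Fin n)) ⊆ g)) := by
      intro g hg
      simp only [hBad2, hHv, Finset.mem_filter] at hg
      obtain ⟨⟨hgH, hvg⟩, u, huef, hug⟩ := hg
      refine Finset.mem_biUnion.2 ⟨u, huef, ?_⟩
      exact Finset.mem_filter.2 ⟨hgH, by
        rw [Finset.insert_subset_iff, Finset.singleton_subset_iff]; exact ⟨hvg, hug⟩⟩
    calc Bad2.card ≤ _ := Finset.card_le_card hsub
      _ ≤ ∑ u ∈ e ∪ f, (H.filter (fun g => ({v, u} : Finset (Fin n)) ⊆ g)).card :=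
        Finset.card_biUnion_le
      _ ≤ ∑ u ∈ e ∪ f, c2 := by
        apply Finset.sum_le_sum
        intro u hu
        have huv : v ≠ u := fun h => hvef (h ▸ hu)
        have := aux_card_filter_superset_le H k hcard {v, u}
        rwa [Finset.card_pair huv] at this
      _ = (e ∪ f).card * c2 := by rw [Finset.sum_const, smul_eq_mul]
      _ ≤ (2*k - 1) * c2 := by
        apply Nat.mul_le_mul_right
        calc (e ∪ f).card ≤ e.card + f.card := Finset.card_union_le e f
          _ = k + (k - 1) := by rw [hcard e heH, hFcard f hfF]
          _ ≤ 2*k - 1 := by omega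
  have hHvge : ((2*k - 1 : ℕ):ℝ) * (c2:ℝ) < (Hv.card : ℝ) := by
    have h2k : ((2*k - 1 : ℕ):ℝ) = 2*(k:ℝ) - 1 := by
      push_cast [Nat.cast_sub (by omega : 1 ≤ 2*k)]; ring
    rw [h2k]
    have key : (2*(k:ℝ) - 1) * (c2:ℝ) < b * (c1:ℝ) := by
      have step : (2*(k:ℝ) - 1) * (c2:ℝ) * ((k:ℝ)-1) < b * (c1:ℝ) * ((k:ℝ)-1) := by
        have e1 : b * (c1:ℝ) * ((k:ℝ)-1) = b * (((n:ℝ)-1) * (c2:ℝ)) := by rw [I2R]; ring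
        rw [e1]
        have hbn : (k:ℝ)^3 + 2*(k:ℝ)^2 < b * ((n:ℝ)-1) := by nlinarith
        have hlt : (2*(k:ℝ)-1)*((k:ℝ)-1) < b*((n:ℝ)-1) := by nlinarith
        nlinarith [mul_lt_mul_of_pos_right hlt hc2posR]
      have := lt_of_mul_lt_mul_right step (by linarith : (0:ℝ) < (k:ℝ)-1).le
      linarith
    calc (2*(k:ℝ) - 1) * (c2:ℝ) < b * (c1:ℝ) := key
      _ ≤ (Hv.card : ℝ) := hdeg
  have hBad2lt : Bad2.card < Hv.card := by
    have h1 : (Bad2.card : ℝ) ≤ ((2*k - 1 : ℕ) : ℝ) * (c2:ℝ) := by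
      exact_mod_cast Nat.cast_le.2 hBad2le
    have : (Bad2.card : ℝ) < (Hv.card : ℝ) := lt_of_le_of_lt h1 hHvge
    exact_mod_cast this
  have hBad2sub : Bad2 ⊆ Hv := Finset.filter_subset _ _
  have : (Hv \ Bad2).Nonempty := by
    rw [← Finset.card_pos, Finset.card_sdiff_of_subset hBad2sub]
    omega
  obtain ⟨e₁, he₁⟩ := this
  rw [Finset.mem_sdiff] at he₁
  obtain ⟨he₁Hv, he₁Bad⟩ := he₁
  have he₁H : e₁ ∈ H := (Finset.mem_filter.1 he₁Hv).1
  have hve₁ : v ∈ e₁ := (Finset.mem_filter.1 he₁Hv).2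
  have hdisj : ∀ u ∈ e ∪ f, u ∉ e₁ := by
    intro u hu hue₁
    exact he₁Bad (Finset.mem_filter.2 ⟨he₁Hv, u, hu, hue₁⟩)
  -- Step 3: build the loose path and contradict hP
  apply hP
  refine ⟨e₁, he₁H, insert v f, (hF f hfF).2, e, heH, ?_, ?_, ?_⟩
  · -- e₁ ∩ insert v f = {v}
    have : e₁ ∩ insert v f = {v} := by
      ext x
      simp only [Finset.mem_inter, Finset.mem_insert, Finset.mem_singleton]
      constructor
      · rintro ⟨hx₁, hx | hx⟩
        · exact hx
        · exact absurd hx₁ (hdisj x (Finset.mem_union_right e hx))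
      · rintro rfl; exact ⟨hve₁, Or.inl rfl⟩
    rw [this, Finset.card_singleton]
  · -- insert v f ∩ e = {w}
    have : insert v f ∩ e = {w} := by
      ext x
      simp only [Finset.mem_inter, Finset.mem_insert, Finset.mem_singleton]
      constructor
      · rintro ⟨hx | hx, hxe⟩
        · exact absurd hxe (hx ▸ hve)
        · exact hfe x hxe hx
      · rintro rfl; exact ⟨Or.inr hwf, hwe⟩
    rw [this, Finset.card_singleton]
  · -- e₁ ∩ e = ∅
    rw [Finset.eq_empty_iff_forall_notMem]
    intro x hx
    rw [Finset.mem_inter] at hx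
    exact hdisj x (Finset.mem_union_left f hx.2) hx.1
end

section
/- For all k ≥ 250 there exists n₀ such that for all n ≥ n₀ the following holds. If C₁, C₂, C₃ are (k−1)-uniform hypergraphs on a common vertex set of at most n vertices, each with at least (0.96^k/(48k)) · C(n−1, k−1) edges, then there exist edges f₁ ∈ C₁, f₂ ∈ C₂, f₃ ∈ C₃ forming a loose (k−1)-path of length three, i.e., after a suitable relabeling of the three sets as g₁, g₂, g₃ one has |g₁∩g₂| = |g₂∩g₃| = 1 and g₁∩g₃ = ∅. -/
lemma key1 (m : ℕ) : 96*(250+(m:ℝ))*(91/100)^(249+m) < (96/100)^(250+m) := by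
  induction m with
  | zero => norm_num
  | succ p ih =>
    have hp : (0:ℝ) ≤ p := Nat.cast_nonneg p
    have hpow : (0:ℝ) < (91/100:ℝ)^(249+p) := by positivity
    have e1 : (249 + (p+1)) = (249+p)+1 := by omega
    have e2 : (250 + (p+1)) = (250+p)+1 := by omega
    rw [e1, e2, pow_succ, pow_succ]
    have h1 := mul_lt_mul_of_pos_right ih (show (0:ℝ) < 96/100 by norm_num)
    push_cast
    nlinarith [h1, hpow, hp, mul_nonneg hp hpow.le]

lemma key2 (m : ℕ) : 1728*(250+(m:ℝ))^2 ≤ (36/25)^(250+m) := by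
  induction m with
  | zero => norm_num
  | succ p ih =>
    have hp : (0:ℝ) ≤ p := Nat.cast_nonneg p
    have e2 : (250 + (p+1)) = (250+p)+1 := by omega
    rw [e2, pow_succ ((36:ℝ)/25)]
    have h1 := mul_le_mul_of_nonneg_right ih (show (0:ℝ) ≤ 36/25 by norm_num)
    push_cast
    nlinarith [h1, hp, sq_nonneg ((p:ℝ)+250)]


lemma key3abs (K N t u c' A B : ℝ) (hK : 250 ≤ K) (ht : 0 < t) (hu : 0 < u) (hc : 0 < c')
    (hcu : 192*K^2*t ≤ c'*u) (hn3 : 3456*K^4*u ≤ N)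
    (hA : 0 ≤ A) (hAK : A ≤ 2*K^3) (hB : 0 ≤ B) (hBK : B ≤ K) :
    A + B*N/u < c'/(48*K)*N/t := by
  have hN0 : (0:ℝ) < N := lt_of_lt_of_le (by positivity) hn3
  have h2 : A + B*N/u = (A*u + B*N)/u := by field_simp
  have h3 : c'/(48*K)*N/t = c'*N/(48*K*t) := by
    field_simp
  rw [h2, h3, div_lt_div_iff₀ hu (by positivity)]
  have step1 : (A*u + B*N)*(48*K*t) ≤ (2*K^3*u + K*N)*(48*K*t) := by
    apply mul_le_mul_of_nonneg_right _ (by positivity)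
    have h4 := mul_le_mul_of_nonneg_right hAK hu.le
    have h5 := mul_le_mul_of_nonneg_right hBK hN0.le
    linarith
  have h5 : 96*K^4*(t*u) ≤ t*N/36 := by
    have h := mul_le_mul_of_nonneg_left hn3 ht.le
    nlinarith
  have h6 : 192*K^2*(t*N) ≤ c'*N*u := by
    have h := mul_le_mul_of_nonneg_right hcu hN0.le
    nlinarith
  have hKK : (62500:ℝ) ≤ K^2 := by nlinarith
  have htn : (0:ℝ) < t*N := mul_pos ht hN0
  calc (A*u + B*N)*(48*K*t) ≤ (2*K^3*u + K*N)*(48*K*t) := step1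
    _ = 96*K^4*(t*u) + 48*K^2*(t*N) := by ring
    _ < c'*N*u := by nlinarith

lemma key3core (m n : ℕ) (hn : 384*(250+m)^4*3^(250+m) ≤ n) :
    2*(249+(m:ℝ))*(248+(m:ℝ))*(249+(m:ℝ)) + (249+(m:ℝ))*(n:ℝ)/3^(248+m)
      < (96/100:ℝ)^(250+m)/(48*(250+(m:ℝ)))*(n:ℝ)/2^(250+m) := by
  have am : (0:ℝ) ≤ (m:ℝ) := Nat.cast_nonneg m
  have ht : (0:ℝ) < 2^(250+m) := by positivity
  have hu : (0:ℝ) < 3^(248+m) := by positivity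
  have hc : (0:ℝ) < (96/100:ℝ)^(250+m) := by positivity
  have e9 : (9:ℝ)*3^(248+m) = 3^(250+m) := by
    rw [show 250+m = (248+m)+2 by omega, pow_add]; ring
  have h36 : ((36:ℝ)/25)^(250+m) * 2^(250+m) = (96/100:ℝ)^(250+m) * (9*3^(248+m)) := by
    rw [e9, ← mul_pow, ← mul_pow]; norm_num
  have hcu : 192*(250+(m:ℝ))^2*2^(250+m) ≤ (96/100:ℝ)^(250+m)*3^(248+m) := by
    have h := mul_le_mul_of_nonneg_right (key2 m) ht.le
    rw [h36] at h; nlinarith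
  have hn3 : 3456*(250+(m:ℝ))^4*3^(248+m) ≤ (n:ℝ) := by
    have h : ((384*(250+m)^4*3^(250+m) : ℕ) : ℝ) ≤ (n:ℝ) := Nat.cast_le.2 hn
    push_cast at h
    rw [← e9] at h; nlinarith
  refine key3abs _ _ _ _ _ _ _ (by linarith) ht hu hc hcu hn3 (by positivity) ?_ (by positivity) (by linarith)
  nlinarith [am, mul_nonneg am am, mul_nonneg (mul_nonneg am am) am]

lemma natlb (m n : ℕ) (hn : 384*(250+m)^4*3^(250+m) ≤ n) : 1001*(250+m) ≤ n := by
  calc 1001*(250+m) ≤ 384*(250+m)^3*(250+m) := by nlinarith [Nat.pow_le_pow_left (show 250 ≤ 250+m by omega) 3]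
    _ = 384*(250+m)^4 := by ring
    _ ≤ 384*(250+m)^4*3^(250+m) := Nat.le_mul_of_pos_right _ (Nat.pow_pos (by norm_num))
    _ ≤ n := hn

set_option maxHeartbeats 1000000 in
lemma keyW (m n w : ℕ) (hn : 384*(250+m)^4*3^(250+m) ≤ n)
    (hw : (96/100:ℝ)^(250+m)/(48*(250+(m:ℝ)))/2 * (((n-1).choose (249+m) : ℕ) : ℝ)
        ≤ ((w.choose (249+m) : ℕ) : ℝ)) :
    10*(n:ℝ)/11 < (w:ℝ) := by
  by_contra hcon
  push_neg at hcon
  have am : (0:ℝ) ≤ (m:ℝ) := Nat.cast_nonneg m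
  have h1001 : 1001*(250+(m:ℝ)) ≤ (n:ℝ) := by exact_mod_cast natlb m n hn
  have hjn : (249+m : ℕ) ≤ n := by have := natlb m n hn; omega
  have hnR : (0:ℝ) < (n:ℝ) := by linarith
  have d1 : (((249+m).factorial : ℕ) : ℝ) * ((w.choose (249+m) : ℕ) : ℝ) ≤ (w:ℝ)^(249+m) := by
    have h := Nat.descFactorial_le_pow w (249+m)
    rw [Nat.descFactorial_eq_factorial_mul_choose] at h
    exact_mod_cast h
  have d3 : ((n:ℝ) - (249+(m:ℝ)))^(249+m)
      ≤ (((249+m).factorial : ℕ) : ℝ) * (((n-1).choose (249+m) : ℕ) : ℝ) := by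
    have h := Nat.pow_sub_le_descFactorial (n-1) (249+m)
    rw [Nat.descFactorial_eq_factorial_mul_choose, show n-1+1-(249+m) = n-(249+m) by omega] at h
    have hc : ((n - (249+m) : ℕ) : ℝ) = (n:ℝ) - (249+(m:ℝ)) := by
      rw [Nat.cast_sub hjn]; push_cast; ring
    calc ((n:ℝ) - (249+(m:ℝ)))^(249+m) = ((n - (249+m) : ℕ) : ℝ)^(249+m) := by rw [hc]
      _ ≤ (((249+m).factorial : ℕ) : ℝ) * (((n-1).choose (249+m) : ℕ) : ℝ) := by exact_mod_cast h
  have hX : (0:ℝ) < (n:ℝ) - (249+(m:ℝ)) := by linarith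
  have hXp : (0:ℝ) < ((n:ℝ) - (249+(m:ℝ)))^(249+m) := by positivity
  have hmid : 10*(n:ℝ)/11 ≤ (91/100)*((n:ℝ) - (249+(m:ℝ))) := by linarith
  have hw10 : (w:ℝ)^(249+m) ≤ ((91/100)*((n:ℝ) - (249+(m:ℝ))))^(249+m) :=
    pow_le_pow_left₀ (Nat.cast_nonneg w) (le_trans hcon hmid) _
  have hmp : ((91/100)*((n:ℝ) - (249+(m:ℝ))))^(249+m)
      = (91/100:ℝ)^(249+m) * ((n:ℝ) - (249+(m:ℝ)))^(249+m) := mul_pow _ _ _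
  have h91 := key1 m
  have hF : (0:ℝ) < (((249+m).factorial : ℕ) : ℝ) := by
    exact_mod_cast Nat.cast_pos.2 (Nat.factorial_pos _)
  have hKpos : (0:ℝ) < 48*(250+(m:ℝ)) := by positivity
  -- abbreviations as haves
  have hRnn : (0:ℝ) ≤ (((n-1).choose (249+m) : ℕ) : ℝ) := Nat.cast_nonneg _
  -- multiply hw by F
  have step1 := mul_le_mul_of_nonneg_left hw hF.le
  -- chain
  have c2pos : (0:ℝ) < (96/100:ℝ)^(250+m)/(48*(250+(m:ℝ)))/2 := by positivity
  have chain : ((96/100:ℝ)^(250+m)/(48*(250+(m:ℝ)))/2) * ((n:ℝ) - (249+(m:ℝ)))^(249+m)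
      ≤ (91/100:ℝ)^(249+m) * ((n:ℝ) - (249+(m:ℝ)))^(249+m) := by
    calc ((96/100:ℝ)^(250+m)/(48*(250+(m:ℝ)))/2) * ((n:ℝ) - (249+(m:ℝ)))^(249+m)
        ≤ ((96/100:ℝ)^(250+m)/(48*(250+(m:ℝ)))/2) * ((((249+m).factorial : ℕ) : ℝ) * (((n-1).choose (249+m) : ℕ) : ℝ)) :=
          mul_le_mul_of_nonneg_left d3 c2pos.le
      _ = (((249+m).factorial : ℕ) : ℝ) * (((96/100:ℝ)^(250+m)/(48*(250+(m:ℝ)))/2) * (((n-1).choose (249+m) : ℕ) : ℝ)) := by ring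
      _ ≤ (((249+m).factorial : ℕ) : ℝ) * ((w.choose (249+m) : ℕ) : ℝ) := step1
      _ ≤ (w:ℝ)^(249+m) := d1
      _ ≤ (91/100:ℝ)^(249+m) * ((n:ℝ) - (249+(m:ℝ)))^(249+m) := by rw [← hmp]; exact hw10
  have hlt : (91/100:ℝ)^(249+m) < (96/100:ℝ)^(250+m)/(48*(250+(m:ℝ)))/2 := by
    rw [div_div, lt_div_iff₀ (by positivity)]
    nlinarith [h91]
  exact lt_irrefl _ (lt_of_le_of_lt chain (mul_lt_mul_of_pos_right hlt hXp))


lemma key3' (m n s : ℕ) (hn : 384*(250+m)^4*3^(250+m) ≤ n) (hs : 3*(s:ℝ) ≤ (n:ℝ)) :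
    2*(249+(m:ℝ))*((n.choose (247+m) : ℕ) : ℝ) + ((s.choose (248+m) : ℕ) : ℝ)
      < (96/100:ℝ)^(250+m)/(48*(250+(m:ℝ))) * (((n-1).choose (249+m) : ℕ) : ℝ) / (2*(n:ℝ)) := by
  have am : (0:ℝ) ≤ (m:ℝ) := Nat.cast_nonneg m
  have h1001 : 1001*(250+(m:ℝ)) ≤ (n:ℝ) := by exact_mod_cast natlb m n hn
  have hjn : (249+m : ℕ) ≤ n := by have := natlb m n hn; omega
  have hnR : (0:ℝ) < (n:ℝ) := by linarith
  have hF1 : (0:ℝ) < (((247+m).factorial : ℕ) : ℝ) := by exact_mod_cast Nat.factorial_pos _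
  have hF2 : (0:ℝ) < (((248+m).factorial : ℕ) : ℝ) := by exact_mod_cast Nat.factorial_pos _
  have hF3 : (0:ℝ) < (((249+m).factorial : ℕ) : ℝ) := by exact_mod_cast Nat.factorial_pos _
  have hF2eq : (((248+m).factorial : ℕ) : ℝ) = (((247+m).factorial : ℕ) : ℝ) * (248+(m:ℝ)) := by
    rw [show 248+m = (247+m)+1 by omega, Nat.factorial_succ]; push_cast; ring
  have hF3eq : (((249+m).factorial : ℕ) : ℝ)
      = (((247+m).factorial : ℕ) : ℝ) * (248+(m:ℝ)) * (249+(m:ℝ)) := by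
    rw [show 249+m = (248+m)+1 by omega, Nat.factorial_succ]; push_cast [hF2eq]; ring
  have d1 : (((247+m).factorial : ℕ) : ℝ) * ((n.choose (247+m) : ℕ) : ℝ) ≤ (n:ℝ)^(247+m) := by
    have h := Nat.descFactorial_le_pow n (247+m)
    rw [Nat.descFactorial_eq_factorial_mul_choose] at h
    exact_mod_cast h
  have d2 : (((248+m).factorial : ℕ) : ℝ) * ((s.choose (248+m) : ℕ) : ℝ) ≤ ((n:ℝ)/3)^(248+m) := by
    have h := Nat.descFactorial_le_pow s (248+m)
    rw [Nat.descFactorial_eq_factorial_mul_choose] at h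
    calc (((248+m).factorial : ℕ) : ℝ) * ((s.choose (248+m) : ℕ) : ℝ) ≤ (s:ℝ)^(248+m) := by
          exact_mod_cast h
      _ ≤ ((n:ℝ)/3)^(248+m) := pow_le_pow_left₀ (Nat.cast_nonneg s) (by linarith) _
  have d3 : ((n:ℝ) - (249+(m:ℝ)))^(249+m)
      ≤ (((249+m).factorial : ℕ) : ℝ) * (((n-1).choose (249+m) : ℕ) : ℝ) := by
    have h := Nat.pow_sub_le_descFactorial (n-1) (249+m)
    rw [Nat.descFactorial_eq_factorial_mul_choose, show n-1+1-(249+m) = n-(249+m) by omega] at h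
    have hc : ((n - (249+m) : ℕ) : ℝ) = (n:ℝ) - (249+(m:ℝ)) := by
      rw [Nat.cast_sub hjn]; push_cast; ring
    calc ((n:ℝ) - (249+(m:ℝ)))^(249+m) = ((n - (249+m) : ℕ) : ℝ)^(249+m) := by rw [hc]
      _ ≤ _ := by exact_mod_cast h
  have dhalf : ((n:ℝ)/2)^(249+m) ≤ ((n:ℝ) - (249+(m:ℝ)))^(249+m) :=
    pow_le_pow_left₀ (by positivity) (by linarith) _
  have hcore := key3core m n hn
  have hP : (0:ℝ) < (n:ℝ)^(247+m) := by positivity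
  have G := mul_lt_mul_of_pos_right hcore (div_pos hP hF3)
  have eL : (2*(249+(m:ℝ))*(248+(m:ℝ))*(249+(m:ℝ)) + (249+(m:ℝ))*(n:ℝ)/3^(248+m)) * ((n:ℝ)^(247+m)/(((249+m).factorial : ℕ) : ℝ))
      = 2*(249+(m:ℝ))*((n:ℝ)^(247+m)/(((247+m).factorial : ℕ) : ℝ))
        + ((n:ℝ)^(247+m)*(n:ℝ))/(3^(248+m)*(((248+m).factorial : ℕ) : ℝ)) := by
    rw [hF3eq, hF2eq]; field_simp
  have h3p : (0:ℝ) < (3:ℝ)^(248+m) := by positivity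
  have e4 : ((n:ℝ)/3)^(248+m)*3^(248+m) = (n:ℝ)^(247+m)*(n:ℝ) := by
    rw [div_pow, div_mul_cancel₀ _ (ne_of_gt h3p), show 248+m = (247+m)+1 by omega, pow_succ]
  have p1 : ((n.choose (247+m) : ℕ) : ℝ) ≤ (n:ℝ)^(247+m)/(((247+m).factorial : ℕ) : ℝ) := by
    rw [le_div_iff₀ hF1]; linarith [d1]
  have p2 : ((s.choose (248+m) : ℕ) : ℝ)
      ≤ ((n:ℝ)^(247+m)*(n:ℝ))/(3^(248+m)*(((248+m).factorial : ℕ) : ℝ)) := by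
    rw [le_div_iff₀ (by positivity)]
    have hd2 := mul_le_mul_of_nonneg_right d2 h3p.le
    rw [e4] at hd2
    nlinarith
  calc 2*(249+(m:ℝ))*((n.choose (247+m) : ℕ) : ℝ) + ((s.choose (248+m) : ℕ) : ℝ)
      ≤ (2*(249+(m:ℝ))*(248+(m:ℝ))*(249+(m:ℝ)) + (249+(m:ℝ))*(n:ℝ)/3^(248+m)) * ((n:ℝ)^(247+m)/(((249+m).factorial : ℕ) : ℝ)) := by
        rw [eL]
        have q1 := mul_le_mul_of_nonneg_left p1 (show (0:ℝ) ≤ 2*(249+(m:ℝ)) by positivity)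
        linarith
    _ < (96/100:ℝ)^(250+m)/(48*(250+(m:ℝ)))*(n:ℝ)/2^(250+m) * ((n:ℝ)^(247+m)/(((249+m).factorial : ℕ) : ℝ)) := G
    _ ≤ (96/100:ℝ)^(250+m)/(48*(250+(m:ℝ))) * (((n-1).choose (249+m) : ℕ) : ℝ) / (2*(n:ℝ)) := by
        have e2 : ((96/100:ℝ)^(250+m)/(48*(250+(m:ℝ)))*(n:ℝ)/2^(250+m))*((n:ℝ)^(247+m)/(((249+m).factorial : ℕ) : ℝ))
            = (96/100:ℝ)^(250+m)/(48*(250+(m:ℝ))) * (((n:ℝ)^(247+m)*(n:ℝ)*(n:ℝ)/2^(249+m))/(((249+m).factorial : ℕ) : ℝ)) / (2*(n:ℝ)) := by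
          have h2p : (2:ℝ)^(250+m) = 2^(249+m)*2 := by
            rw [show 250+m = (249+m)+1 by omega, pow_succ]
          rw [h2p]; field_simp
        rw [e2]
        have hnum : ((n:ℝ)^(247+m)*(n:ℝ)*(n:ℝ)/2^(249+m))/(((249+m).factorial : ℕ) : ℝ)
            ≤ (((n-1).choose (249+m) : ℕ) : ℝ) := by
          rw [div_le_iff₀ hF3]
          have e3 : ((n:ℝ)/2)^(249+m) = (n:ℝ)^(247+m)*(n:ℝ)*(n:ℝ)/2^(249+m) := by
            rw [div_pow, show 249+m = (247+m)+1+1 by omega, pow_succ, pow_succ]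
          calc (n:ℝ)^(247+m)*(n:ℝ)*(n:ℝ)/2^(249+m) = ((n:ℝ)/2)^(249+m) := e3.symm
            _ ≤ (((249+m).factorial : ℕ) : ℝ) * (((n-1).choose (249+m) : ℕ) : ℝ) := le_trans dhalf d3
            _ = (((n-1).choose (249+m) : ℕ) : ℝ) * (((249+m).factorial : ℕ) : ℝ) := by ring
        gcongr

lemma count_subset {V : Type} [DecidableEq V] (C : Finset (Finset V)) (j : ℕ)
    (hC : ∀ f ∈ C, f.card = j) (W : Finset V) :
    (C.filter (fun f => f ⊆ W)).card ≤ W.card.choose j := by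
  rw [← Finset.card_powersetCard j W]
  apply Finset.card_le_card
  intro f hf
  rw [Finset.mem_filter] at hf
  rw [Finset.mem_powersetCard]
  exact ⟨hf.2, hC f hf.1⟩

lemma count_meet {V : Type} [DecidableEq V] (C : Finset (Finset V)) (B : Finset V) :
    (C.filter (fun f => (f ∩ B).Nonempty)).card ≤ ∑ x ∈ B, (C.filter (fun f => x ∈ f)).card := by
  calc (C.filter (fun f => (f ∩ B).Nonempty)).card
      ≤ (B.biUnion (fun x => C.filter (fun f => x ∈ f))).card := by
        apply Finset.card_le_card; intro f hf
        rw [Finset.mem_filter] at hf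
        obtain ⟨x, hx⟩ := hf.2
        rw [Finset.mem_inter] at hx
        exact Finset.mem_biUnion.2 ⟨x, hx.2, Finset.mem_filter.2 ⟨hf.1, hx.1⟩⟩
    _ ≤ _ := Finset.card_biUnion_le

lemma count_supset {V : Type} [Fintype V] [DecidableEq V] (C : Finset (Finset V)) (r : ℕ)
    (A : Finset V) (hC : ∀ f ∈ C, f.card = r + A.card) :
    (C.filter (fun f => A ⊆ f)).card ≤ (Fintype.card V).choose r := by
  have h : ((Finset.univ : Finset V).powersetCard r).card = (Fintype.card V).choose r := by
    rw [Finset.card_powersetCard, Finset.card_univ]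
  rw [← h]
  apply Finset.card_le_card_of_injOn (fun f => f \ A)
  · intro f hf
    simp only [Finset.mem_coe, Finset.mem_filter] at hf ⊢
    rw [Finset.mem_powersetCard]
    refine ⟨Finset.subset_univ _, ?_⟩
    rw [Finset.card_sdiff_of_subset hf.2, hC f hf.1]; omega
  · intro f hf g hg hfg
    simp only [Finset.mem_coe, Finset.mem_filter] at hf hg
    have h2 : f \ A ∪ A = g \ A ∪ A := by simp only [] at hfg; rw [hfg]
    rwa [Finset.sdiff_union_of_subset hf.2, Finset.sdiff_union_of_subset hg.2] at h2

lemma count_star {V : Type} [DecidableEq V] (C : Finset (Finset V)) (j : ℕ)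
    (hC : ∀ f ∈ C, f.card = j + 1) (x : V) (S : Finset V) (hx : x ∉ S) :
    (C.filter (fun f => x ∈ f ∧ f ⊆ insert x S)).card ≤ S.card.choose j := by
  rw [← Finset.card_powersetCard j S]
  apply Finset.card_le_card_of_injOn (fun f => f.erase x)
  · intro f hf
    simp only [Finset.mem_coe, Finset.mem_filter] at hf ⊢
    rw [Finset.mem_powersetCard]
    constructor
    · intro z hz
      rw [Finset.mem_erase] at hz
      have h2 := hf.2.2 hz.2
      rw [Finset.mem_insert] at h2
      tauto
    · rw [Finset.card_erase_of_mem hf.2.1, hC f hf.1]; omega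
  · intro f hf g hg hfg
    simp only [Finset.mem_coe, Finset.mem_filter] at hf hg
    simp only [] at hfg
    rw [← Finset.insert_erase hf.2.1, ← Finset.insert_erase hg.2.1, hfg]

/-- For all k ≥ 250 there exists n₀ such that for all n ≥ n₀: if C₁, C₂,
C₃ are (k−1)-uniform hypergraphs on a common vertex set of at most n vertices, each
with at least (0.96^k/(48k)) · C(n−1, k−1) edges, then there exist f₁ ∈ C₁, f₂ ∈ C₂,
f₃ ∈ C₃ forming a loose (k−1)-path of length three: after a suitable relabeling as
g₁, g₂, g₃ (choosing which of the three is the middle edge) one has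
|g₁ ∩ g₂| = |g₂ ∩ g₃| = 1 and g₁ ∩ g₃ = ∅. -/
theorem rainbow_loose_path_in_dense_colors :
    ∀ k : ℕ, 250 ≤ k → ∃ n₀ : ℕ, ∀ n : ℕ, n₀ ≤ n →
      ∀ (V : Type) [Fintype V] [DecidableEq V], Fintype.card V ≤ n →
        ∀ C₁ C₂ C₃ : Finset (Finset V),
          (∀ f ∈ C₁, f.card = k - 1) →
          (∀ f ∈ C₂, f.card = k - 1) →
          (∀ f ∈ C₃, f.card = k - 1) →
          ((C₁.card : ℝ) ≥ 0.96 ^ k / (48 * k) * (Nat.choose (n - 1) (k - 1) : ℝ)) →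
          ((C₂.card : ℝ) ≥ 0.96 ^ k / (48 * k) * (Nat.choose (n - 1) (k - 1) : ℝ)) →
          ((C₃.card : ℝ) ≥ 0.96 ^ k / (48 * k) * (Nat.choose (n - 1) (k - 1) : ℝ)) →
          ∃ f₁ ∈ C₁, ∃ f₂ ∈ C₂, ∃ f₃ ∈ C₃,
            (((f₁ ∩ f₂).card = 1 ∧ (f₂ ∩ f₃).card = 1 ∧ f₁ ∩ f₃ = ∅) ∨
             ((f₂ ∩ f₁).card = 1 ∧ (f₁ ∩ f₃).card = 1 ∧ f₂ ∩ f₃ = ∅) ∨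
             ((f₁ ∩ f₃).card = 1 ∧ (f₃ ∩ f₂).card = 1 ∧ f₁ ∩ f₂ = ∅)) := by
  intro k hk
  obtain ⟨m, rfl⟩ := Nat.exists_eq_add_of_le hk
  refine ⟨384*(250+m)^4*3^(250+m), ?_⟩
  intro n hn V _ _ hV C₁ C₂ C₃ hu1 hu2 hu3 h1 h2 h3
  classical
  have hj : 250 + m - 1 = 249 + m := by omega
  rw [hj] at hu1 hu2 hu3 h1 h2 h3
  have h096 : (0.96 : ℝ) = 96/100 := by norm_num
  rw [h096] at h1 h2 h3
  push_cast at h1 h2 h3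
  have h1001 : 1001*(250+(m:ℝ)) ≤ (n:ℝ) := by exact_mod_cast natlb m n hn
  have am : (0:ℝ) ≤ (m:ℝ) := Nat.cast_nonneg m
  have hnR : (0:ℝ) < (n:ℝ) := by linarith
  have hjn1 : 249+m ≤ n - 1 := by have := natlb m n hn; omega
  have hch0 : (0:ℝ) < (((n-1).choose (249+m) : ℕ) : ℝ) := by exact_mod_cast Nat.choose_pos hjn1
  have hD0 : (0:ℝ) < (96/100:ℝ)^(250+m)/(48*(250+(m:ℝ)))/2 * (((n-1).choose (249+m) : ℕ) : ℝ) / (n:ℝ) := by positivity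
  have hNR : ((Fintype.card V : ℕ):ℝ) ≤ (n:ℝ) := by exact_mod_cast hV
  -- main claim: each dense colour class has a large set of vertices of large degree
  have main_claim : ∀ C : Finset (Finset V), (∀ f ∈ C, f.card = 249+m) →
      ((96/100:ℝ)^(250+m)/(48*(250+(m:ℝ))) * (((n-1).choose (249+m) : ℕ) : ℝ) ≤ (C.card:ℝ)) →
      ∃ W : Finset V, 10*(n:ℝ)/11 < (W.card : ℝ) ∧
        ∀ x ∈ W, (96/100:ℝ)^(250+m)/(48*(250+(m:ℝ)))/2 * (((n-1).choose (249+m) : ℕ) : ℝ) / (n:ℝ) ≤ ((C.filter (fun f => x ∈ f)).card : ℝ) := by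
    intro C hC hcard
    refine ⟨Finset.univ.filter (fun x : V => (96/100:ℝ)^(250+m)/(48*(250+(m:ℝ)))/2 * (((n-1).choose (249+m) : ℕ) : ℝ) / (n:ℝ) ≤ ((C.filter (fun f => x ∈ f)).card : ℝ)), ?_, ?_⟩
    swap
    · intro x hx
      exact (Finset.mem_filter.1 hx).2
    set W := Finset.univ.filter (fun x : V => (96/100:ℝ)^(250+m)/(48*(250+(m:ℝ)))/2 * (((n-1).choose (249+m) : ℕ) : ℝ) / (n:ℝ) ≤ ((C.filter (fun f => x ∈ f)).card : ℝ)) with hWdef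
    have hsub : C ⊆ (C.filter (fun f => f ⊆ W)) ∪ (C.filter (fun f => (f ∩ (Finset.univ \ W)).Nonempty)) := by
      intro f hf
      rw [Finset.mem_union, Finset.mem_filter, Finset.mem_filter]
      by_cases hs : f ⊆ W
      · exact Or.inl ⟨hf, hs⟩
      · obtain ⟨z, hzf, hzW⟩ := Finset.not_subset.1 hs
        exact Or.inr ⟨hf, ⟨z, Finset.mem_inter.2 ⟨hzf, Finset.mem_sdiff.2 ⟨Finset.mem_univ _, hzW⟩⟩⟩⟩
    have split : (C.card:ℝ) ≤ ((C.filter (fun f => f ⊆ W)).card : ℝ)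
        + ((C.filter (fun f => (f ∩ (Finset.univ \ W)).Nonempty)).card : ℝ) := by
      have := le_trans (Finset.card_le_card hsub) (Finset.card_union_le _ _)
      exact_mod_cast this
    have meetB : ((C.filter (fun f => (f ∩ (Finset.univ \ W)).Nonempty)).card : ℝ)
        ≤ (96/100:ℝ)^(250+m)/(48*(250+(m:ℝ)))/2 * (((n-1).choose (249+m) : ℕ) : ℝ) := by
      have step2 : ∀ x ∈ Finset.univ \ W, ((C.filter (fun f => x ∈ f)).card : ℝ) ≤ (96/100:ℝ)^(250+m)/(48*(250+(m:ℝ)))/2 * (((n-1).choose (249+m) : ℕ) : ℝ) / (n:ℝ) := by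
        intro x hx
        rw [Finset.mem_sdiff, hWdef, Finset.mem_filter] at hx
        push_neg at hx
        exact le_of_lt (hx.2 (Finset.mem_univ _))
      calc ((C.filter (fun f => (f ∩ (Finset.univ \ W)).Nonempty)).card : ℝ)
          ≤ ((∑ x ∈ Finset.univ \ W, (C.filter (fun f => x ∈ f)).card : ℕ) : ℝ) := by
            exact_mod_cast count_meet C (Finset.univ \ W)
        _ = ∑ x ∈ Finset.univ \ W, ((C.filter (fun f => x ∈ f)).card : ℝ) := by push_cast; rfl
        _ ≤ (Finset.univ \ W).card • ((96/100:ℝ)^(250+m)/(48*(250+(m:ℝ)))/2 * (((n-1).choose (249+m) : ℕ) : ℝ) / (n:ℝ)) := Finset.sum_le_card_nsmul _ _ _ step2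
        _ = ((Finset.univ \ W).card : ℝ) * ((96/100:ℝ)^(250+m)/(48*(250+(m:ℝ)))/2 * (((n-1).choose (249+m) : ℕ) : ℝ) / (n:ℝ)) := nsmul_eq_mul _ _
        _ ≤ (n:ℝ) * ((96/100:ℝ)^(250+m)/(48*(250+(m:ℝ)))/2 * (((n-1).choose (249+m) : ℕ) : ℝ) / (n:ℝ)) := by
            apply mul_le_mul_of_nonneg_right _ hD0.le
            calc ((Finset.univ \ W).card : ℝ) ≤ ((Fintype.card V : ℕ):ℝ) := by
                  exact_mod_cast Finset.card_le_univ _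
              _ ≤ (n:ℝ) := hNR
        _ = (96/100:ℝ)^(250+m)/(48*(250+(m:ℝ)))/2 * (((n-1).choose (249+m) : ℕ) : ℝ) := by field_simp
    have inW : (96/100:ℝ)^(250+m)/(48*(250+(m:ℝ)))/2 * (((n-1).choose (249+m) : ℕ) : ℝ) ≤ ((C.filter (fun f => f ⊆ W)).card : ℝ) := by linarith
    have hWch : (96/100:ℝ)^(250+m)/(48*(250+(m:ℝ)))/2 * (((n-1).choose (249+m) : ℕ) : ℝ) ≤ ((W.card.choose (249+m) : ℕ):ℝ) := by
      refine le_trans inW ?_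
      exact_mod_cast count_subset C (249+m) hC W
    exact keyW m n W.card hn hWch
  obtain ⟨W1, hW1c, hW1d⟩ := main_claim C₁ hu1 h1
  obtain ⟨W2, hW2c, hW2d⟩ := main_claim C₂ hu2 h2
  obtain ⟨W3, hW3c, hW3d⟩ := main_claim C₃ hu3 h3
  -- the common high-degree set H
  have hH : 8*(n:ℝ)/11 < ((W1 ∩ W2 ∩ W3).card : ℝ) := by
    have u12 : ((W1 ∪ W2).card:ℝ) ≤ (n:ℝ) :=
      le_trans (by exact_mod_cast Finset.card_le_univ _) hNR
    have u123 : (((W1 ∩ W2) ∪ W3).card:ℝ) ≤ (n:ℝ) :=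
      le_trans (by exact_mod_cast Finset.card_le_univ _) hNR
    have r12 : ((W1 ∩ W2).card:ℝ) + ((W1 ∪ W2).card:ℝ) = (W1.card:ℝ) + (W2.card:ℝ) := by
      exact_mod_cast Finset.card_inter_add_card_union W1 W2
    have r123 : ((W1 ∩ W2 ∩ W3).card:ℝ) + (((W1 ∩ W2) ∪ W3).card:ℝ)
        = ((W1 ∩ W2).card:ℝ) + (W3.card:ℝ) := by
      exact_mod_cast Finset.card_inter_add_card_union (W1 ∩ W2) W3
    linarith
  have hHne : ((W1 ∩ W2 ∩ W3)).Nonempty := by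
    rw [← Finset.card_pos]
    by_contra hcon
    push_neg at hcon
    have : ((W1 ∩ W2 ∩ W3).card : ℝ) = 0 := by
      have : (W1 ∩ W2 ∩ W3).card = 0 := by omega
      rw [this]; norm_num
    linarith
  obtain ⟨x, hxH⟩ := hHne
  have hx12 := Finset.mem_inter.1 hxH
  have hx1 := (Finset.mem_inter.1 hx12.1).1
  have hx2 := (Finset.mem_inter.1 hx12.1).2
  have hx3 := hx12.2
  -- pick f₁ ∈ C₁ through x
  have hdeg1 := hW1d x hx1
  have hf1ne : (C₁.filter (fun f => x ∈ f)).Nonempty := by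
    rw [← Finset.card_pos]
    by_contra hcon
    push_neg at hcon
    have h0 : (C₁.filter (fun f => x ∈ f)).card = 0 := by omega
    rw [h0] at hdeg1
    norm_num at hdeg1
    linarith
  obtain ⟨f₁, hf₁⟩ := hf1ne
  rw [Finset.mem_filter] at hf₁
  -- bound on S
  have hS3 : 3 * ((((Finset.univ \ (W1 ∩ W2 ∩ W3)) ∪ f₁).erase x).card : ℝ) ≤ (n:ℝ) := by
    have s1 : (((Finset.univ \ (W1 ∩ W2 ∩ W3)) ∪ f₁).erase x).card
        ≤ (Finset.univ \ (W1 ∩ W2 ∩ W3)).card + f₁.card :=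
      le_trans (Finset.card_erase_le) (Finset.card_union_le _ _)
    have s2 : ((Finset.univ \ (W1 ∩ W2 ∩ W3)).card : ℝ) ≤ (n:ℝ) - ((W1 ∩ W2 ∩ W3).card:ℝ) := by
      rw [Finset.card_univ_diff]
      have hle : (W1 ∩ W2 ∩ W3).card ≤ Fintype.card V := by
        rw [← Finset.card_univ]; exact Finset.card_le_univ _
      rw [Nat.cast_sub hle]
      linarith
    have s3 : (f₁.card:ℝ) = 249+(m:ℝ) := by rw [hu1 f₁ hf₁.1]; push_cast; ring
    have s4 : ((((Finset.univ \ (W1 ∩ W2 ∩ W3)) ∪ f₁).erase x).card : ℝ)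
        ≤ ((Finset.univ \ (W1 ∩ W2 ∩ W3)).card : ℝ) + (f₁.card:ℝ) := by exact_mod_cast s1
    linarith
  have hkey := key3' m n ((((Finset.univ \ (W1 ∩ W2 ∩ W3)) ∪ f₁).erase x).card) hn hS3
  have hDeq : (96/100:ℝ)^(250+m)/(48*(250+(m:ℝ))) * (((n-1).choose (249+m) : ℕ) : ℝ) / (2*(n:ℝ)) = (96/100:ℝ)^(250+m)/(48*(250+(m:ℝ)))/2 * (((n-1).choose (249+m) : ℕ) : ℝ) / (n:ℝ) := by ring
  rw [hDeq] at hkey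
  have hchn0 : (0:ℝ) ≤ ((n.choose (247+m) : ℕ) : ℝ) := Nat.cast_nonneg _
  -- bad set 1 for colour 2
  have hB1 : (((C₂.filter (fun f => x ∈ f)).filter
        (fun f => (f ∩ (f₁.erase x)).Nonempty)).card : ℝ)
      ≤ 2*(249+(m:ℝ)) * ((n.choose (247+m) : ℕ) : ℝ) := by
    have per : ∀ z ∈ f₁.erase x,
        ((C₂.filter (fun f => x ∈ f)).filter (fun f => z ∈ f)).card ≤ n.choose (247+m) := by
      intro z hz
      rw [Finset.mem_erase] at hz
      have hxz : x ∉ ({z} : Finset V) := by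
        rw [Finset.mem_singleton]; exact fun h => hz.1 h.symm
      have hA2 : ({x, z} : Finset V).card = 2 := by
        rw [Finset.card_insert_of_notMem hxz, Finset.card_singleton]
      have hsub : (C₂.filter (fun f => x ∈ f)).filter (fun f => z ∈ f)
          ⊆ C₂.filter (fun f => ({x, z} : Finset V) ⊆ f) := by
        intro f hf
        simp only [Finset.mem_filter] at hf ⊢
        refine ⟨hf.1.1, ?_⟩
        rw [Finset.insert_subset_iff]
        exact ⟨hf.1.2, Finset.singleton_subset_iff.2 hf.2⟩
      calc ((C₂.filter (fun f => x ∈ f)).filter (fun f => z ∈ f)).card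
          ≤ (C₂.filter (fun f => ({x, z} : Finset V) ⊆ f)).card := Finset.card_le_card hsub
        _ ≤ (Fintype.card V).choose (247+m) := by
            apply count_supset C₂ (247+m)
            intro f hf
            rw [hA2, hu2 f hf]; omega
        _ ≤ n.choose (247+m) := Nat.choose_le_choose _ hV
    have hcerase : (f₁.erase x).card = 248+m := by
      rw [Finset.card_erase_of_mem hf₁.2, hu1 f₁ hf₁.1]
      omega
    have hnat : ((C₂.filter (fun f => x ∈ f)).filter
          (fun f => (f ∩ (f₁.erase x)).Nonempty)).card ≤ (248+m) * n.choose (247+m) := by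
      calc ((C₂.filter (fun f => x ∈ f)).filter (fun f => (f ∩ (f₁.erase x)).Nonempty)).card
          ≤ ∑ z ∈ f₁.erase x, ((C₂.filter (fun f => x ∈ f)).filter (fun f => z ∈ f)).card :=
            count_meet _ _
        _ ≤ ∑ _z ∈ f₁.erase x, n.choose (247+m) := Finset.sum_le_sum per
        _ = (f₁.erase x).card * n.choose (247+m) := by rw [Finset.sum_const, smul_eq_mul]
        _ = (248+m) * n.choose (247+m) := by rw [hcerase]
    calc (((C₂.filter (fun f => x ∈ f)).filter
          (fun f => (f ∩ (f₁.erase x)).Nonempty)).card : ℝ)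
        ≤ (((248+m) * n.choose (247+m) : ℕ) : ℝ) := by exact_mod_cast hnat
      _ = (248+(m:ℝ)) * ((n.choose (247+m) : ℕ) : ℝ) := by push_cast; ring
      _ ≤ 2*(249+(m:ℝ)) * ((n.choose (247+m) : ℕ) : ℝ) := by nlinarith
  -- bad set 2 for colour 2
  have hB2 : (((C₂.filter (fun f => x ∈ f)).filter
        (fun f => f ⊆ insert x (((Finset.univ \ (W1 ∩ W2 ∩ W3)) ∪ f₁).erase x))).card : ℝ)
      ≤ ((((((Finset.univ \ (W1 ∩ W2 ∩ W3)) ∪ f₁).erase x).card).choose (248+m) : ℕ) : ℝ) := by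
    have hsub : (C₂.filter (fun f => x ∈ f)).filter
          (fun f => f ⊆ insert x (((Finset.univ \ (W1 ∩ W2 ∩ W3)) ∪ f₁).erase x))
        ⊆ C₂.filter (fun f => x ∈ f ∧ f ⊆ insert x (((Finset.univ \ (W1 ∩ W2 ∩ W3)) ∪ f₁).erase x)) := by
      intro f hf
      simp only [Finset.mem_filter] at hf ⊢
      tauto
    have := le_trans (Finset.card_le_card hsub)
      (count_star C₂ (248+m) (by intro f hf; rw [hu2 f hf]; omega) x _ (Finset.notMem_erase _ _))
    exact_mod_cast this
  have hdeg2 := hW2d x hx2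
  -- find f₂
  have hlt2 : ((C₂.filter (fun f => x ∈ f)).filter (fun f => (f ∩ (f₁.erase x)).Nonempty)).card
      + ((C₂.filter (fun f => x ∈ f)).filter
        (fun f => f ⊆ insert x (((Finset.univ \ (W1 ∩ W2 ∩ W3)) ∪ f₁).erase x))).card
      < (C₂.filter (fun f => x ∈ f)).card := by
    have hr : (((C₂.filter (fun f => x ∈ f)).filter (fun f => (f ∩ (f₁.erase x)).Nonempty)).card : ℝ)
        + (((C₂.filter (fun f => x ∈ f)).filter
          (fun f => f ⊆ insert x (((Finset.univ \ (W1 ∩ W2 ∩ W3)) ∪ f₁).erase x))).card : ℝ)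
        < ((C₂.filter (fun f => x ∈ f)).card : ℝ) :=
      lt_of_le_of_lt (add_le_add hB1 hB2) (lt_of_lt_of_le hkey hdeg2)
    exact_mod_cast hr
  have hf2ex : ((C₂.filter (fun f => x ∈ f)) \
      (((C₂.filter (fun f => x ∈ f)).filter (fun f => (f ∩ (f₁.erase x)).Nonempty))
        ∪ ((C₂.filter (fun f => x ∈ f)).filter
          (fun f => f ⊆ insert x (((Finset.univ \ (W1 ∩ W2 ∩ W3)) ∪ f₁).erase x))))).Nonempty := by
    rw [← Finset.card_pos, Finset.card_sdiff_of_subset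
      (Finset.union_subset (Finset.filter_subset _ _) (Finset.filter_subset _ _))]
    have := Finset.card_union_le
      ((C₂.filter (fun f => x ∈ f)).filter (fun f => (f ∩ (f₁.erase x)).Nonempty))
      ((C₂.filter (fun f => x ∈ f)).filter
        (fun f => f ⊆ insert x (((Finset.univ \ (W1 ∩ W2 ∩ W3)) ∪ f₁).erase x)))
    omega
  obtain ⟨f₂, hf₂s⟩ := hf2ex
  rw [Finset.mem_sdiff, Finset.mem_union] at hf₂s
  obtain ⟨hf₂P, hf₂not⟩ := hf₂s
  push_neg at hf₂not
  have hf₂C := (Finset.mem_filter.1 hf₂P).1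
  have hxf₂ := (Finset.mem_filter.1 hf₂P).2
  have hf2f1 : f₂ ∩ f₁.erase x = ∅ := by
    rw [← Finset.not_nonempty_iff_eq_empty]
    intro hne
    exact hf₂not.1 (Finset.mem_filter.2 ⟨hf₂P, hne⟩)
  have hnsub : ¬ f₂ ⊆ insert x (((Finset.univ \ (W1 ∩ W2 ∩ W3)) ∪ f₁).erase x) := by
    intro hsub
    exact hf₂not.2 (Finset.mem_filter.2 ⟨hf₂P, hsub⟩)
  obtain ⟨y, hyf₂, hyS⟩ := Finset.not_subset.1 hnsub
  have hyx : y ≠ x := by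
    intro h
    rw [h] at hyS
    exact hyS (Finset.mem_insert_self x _)
  have hynot : y ∉ (Finset.univ \ (W1 ∩ W2 ∩ W3)) ∪ f₁ := by
    intro hmem
    exact hyS (Finset.mem_insert.2 (Or.inr (Finset.mem_erase.2 ⟨hyx, hmem⟩)))
  rw [Finset.mem_union, Finset.mem_sdiff] at hynot
  push_neg at hynot
  have hyH : y ∈ W1 ∩ W2 ∩ W3 := hynot.1 (Finset.mem_univ _)
  have hyf₁ : y ∉ f₁ := hynot.2
  have hy3 : y ∈ W3 := (Finset.mem_inter.1 hyH).2
  -- bad set for colour 3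
  have hB3 : (((C₃.filter (fun f => y ∈ f)).filter
        (fun f => (f ∩ ((f₁ ∪ f₂).erase y)).Nonempty)).card : ℝ)
      ≤ 2*(249+(m:ℝ)) * ((n.choose (247+m) : ℕ) : ℝ) := by
    have per : ∀ z ∈ (f₁ ∪ f₂).erase y,
        ((C₃.filter (fun f => y ∈ f)).filter (fun f => z ∈ f)).card ≤ n.choose (247+m) := by
      intro z hz
      rw [Finset.mem_erase] at hz
      have hyz : y ∉ ({z} : Finset V) := by
        rw [Finset.mem_singleton]; exact fun h => hz.1 h.symm
      have hA2 : ({y, z} : Finset V).card = 2 := by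
        rw [Finset.card_insert_of_notMem hyz, Finset.card_singleton]
      have hsub : (C₃.filter (fun f => y ∈ f)).filter (fun f => z ∈ f)
          ⊆ C₃.filter (fun f => ({y, z} : Finset V) ⊆ f) := by
        intro f hf
        simp only [Finset.mem_filter] at hf ⊢
        refine ⟨hf.1.1, ?_⟩
        rw [Finset.insert_subset_iff]
        exact ⟨hf.1.2, Finset.singleton_subset_iff.2 hf.2⟩
      calc ((C₃.filter (fun f => y ∈ f)).filter (fun f => z ∈ f)).card
          ≤ (C₃.filter (fun f => ({y, z} : Finset V) ⊆ f)).card := Finset.card_le_card hsub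
        _ ≤ (Fintype.card V).choose (247+m) := by
            apply count_supset C₃ (247+m)
            intro f hf
            rw [hA2, hu3 f hf]; omega
        _ ≤ n.choose (247+m) := Nat.choose_le_choose _ hV
    have hcerase : ((f₁ ∪ f₂).erase y).card ≤ (249+m) + (249+m) := by
      calc ((f₁ ∪ f₂).erase y).card ≤ (f₁ ∪ f₂).card := Finset.card_erase_le
        _ ≤ f₁.card + f₂.card := Finset.card_union_le _ _
        _ = (249+m) + (249+m) := by rw [hu1 f₁ hf₁.1, hu2 f₂ hf₂C]
    have hnat : ((C₃.filter (fun f => y ∈ f)).filter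
          (fun f => (f ∩ ((f₁ ∪ f₂).erase y)).Nonempty)).card
        ≤ ((249+m)+(249+m)) * n.choose (247+m) := by
      calc ((C₃.filter (fun f => y ∈ f)).filter
            (fun f => (f ∩ ((f₁ ∪ f₂).erase y)).Nonempty)).card
          ≤ ∑ z ∈ (f₁ ∪ f₂).erase y, ((C₃.filter (fun f => y ∈ f)).filter (fun f => z ∈ f)).card :=
            count_meet _ _
        _ ≤ ∑ _z ∈ (f₁ ∪ f₂).erase y, n.choose (247+m) := Finset.sum_le_sum per
        _ = ((f₁ ∪ f₂).erase y).card * n.choose (247+m) := by rw [Finset.sum_const, smul_eq_mul]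
        _ ≤ ((249+m)+(249+m)) * n.choose (247+m) := Nat.mul_le_mul_right _ hcerase
    calc (((C₃.filter (fun f => y ∈ f)).filter
          (fun f => (f ∩ ((f₁ ∪ f₂).erase y)).Nonempty)).card : ℝ)
        ≤ ((((249+m)+(249+m)) * n.choose (247+m) : ℕ) : ℝ) := by exact_mod_cast hnat
      _ = 2*(249+(m:ℝ)) * ((n.choose (247+m) : ℕ) : ℝ) := by push_cast; ring
  have hdeg3 := hW3d y hy3
  have hchS0 : (0:ℝ) ≤ ((((((Finset.univ \ (W1 ∩ W2 ∩ W3)) ∪ f₁).erase x).card).choose (248+m) : ℕ) : ℝ) :=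
    Nat.cast_nonneg _
  have hlt3 : ((C₃.filter (fun f => y ∈ f)).filter
        (fun f => (f ∩ ((f₁ ∪ f₂).erase y)).Nonempty)).card
      < (C₃.filter (fun f => y ∈ f)).card := by
    have hr : (((C₃.filter (fun f => y ∈ f)).filter
          (fun f => (f ∩ ((f₁ ∪ f₂).erase y)).Nonempty)).card : ℝ)
        < ((C₃.filter (fun f => y ∈ f)).card : ℝ) :=
      lt_of_le_of_lt (le_trans hB3 (le_add_of_nonneg_right hchS0)) (lt_of_lt_of_le hkey hdeg3)
    exact_mod_cast hr
  have hf3ex : ((C₃.filter (fun f => y ∈ f)) \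
      ((C₃.filter (fun f => y ∈ f)).filter
        (fun f => (f ∩ ((f₁ ∪ f₂).erase y)).Nonempty))).Nonempty := by
    rw [← Finset.card_pos, Finset.card_sdiff_of_subset (Finset.filter_subset _ _)]
    omega
  obtain ⟨f₃, hf₃s⟩ := hf3ex
  rw [Finset.mem_sdiff] at hf₃s
  obtain ⟨hf₃P, hf₃not⟩ := hf₃s
  have hf₃C := (Finset.mem_filter.1 hf₃P).1
  have hyf₃ := (Finset.mem_filter.1 hf₃P).2
  have hf3cap : f₃ ∩ ((f₁ ∪ f₂).erase y) = ∅ := by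
    rw [← Finset.not_nonempty_iff_eq_empty]
    intro hne
    exact hf₃not (Finset.mem_filter.2 ⟨hf₃P, hne⟩)
  -- assemble the loose path
  refine ⟨f₁, hf₁.1, f₂, hf₂C, f₃, hf₃C, Or.inl ⟨?_, ?_, ?_⟩⟩
  · have hsing : f₁ ∩ f₂ = {x} := by
      apply Finset.eq_singleton_iff_unique_mem.2
      refine ⟨Finset.mem_inter.2 ⟨hf₁.2, hxf₂⟩, ?_⟩
      intro z hz
      rw [Finset.mem_inter] at hz
      by_contra hzx
      have hmem : z ∈ f₂ ∩ f₁.erase x :=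
        Finset.mem_inter.2 ⟨hz.2, Finset.mem_erase.2 ⟨hzx, hz.1⟩⟩
      rw [hf2f1] at hmem
      exact Finset.notMem_empty z hmem
    rw [hsing, Finset.card_singleton]
  · have hsing : f₂ ∩ f₃ = {y} := by
      apply Finset.eq_singleton_iff_unique_mem.2
      refine ⟨Finset.mem_inter.2 ⟨hyf₂, hyf₃⟩, ?_⟩
      intro z hz
      rw [Finset.mem_inter] at hz
      by_contra hzy
      have hmem : z ∈ f₃ ∩ ((f₁ ∪ f₂).erase y) :=
        Finset.mem_inter.2 ⟨hz.2, Finset.mem_erase.2 ⟨hzy, Finset.mem_union.2 (Or.inr hz.1)⟩⟩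
      rw [hf3cap] at hmem
      exact Finset.notMem_empty z hmem
    rw [hsing, Finset.card_singleton]
  · rw [Finset.eq_empty_iff_forall_notMem]
    intro z hz
    rw [Finset.mem_inter] at hz
    have hzy : z ≠ y := fun h => hyf₁ (h ▸ hz.1)
    have hmem : z ∈ f₃ ∩ ((f₁ ∪ f₂).erase y) :=
      Finset.mem_inter.2 ⟨hz.2, Finset.mem_erase.2 ⟨hzy, Finset.mem_union.2 (Or.inl hz.1)⟩⟩
    rw [hf3cap] at hmem
    exact Finset.notMem_empty z hmem
end

section
/- For every integer k ≥ 3, (1 − (0.9^k/(k−1))^{1/(k−2)})^{k−1} < 0.96^k. -/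
lemma aux_pow_ineq : ∀ k : ℕ, 3 ≤ k →
    ((k : ℝ) - 1) * (0.36 : ℝ) ^ (k - 2) ≤ (0.9 : ℝ) ^ k := by
  intro k hk
  induction k with
  | zero => omega
  | succ n ih =>
    rcases Nat.lt_or_ge n 3 with hn | hn
    · interval_cases n
      · omega
      · omega
      · norm_num
    · have h := ih (by omega)
      have hcast : (3 : ℝ) ≤ (n : ℝ) := by exact_mod_cast hn
      have e : n + 1 - 2 = (n - 2) + 1 := by omega
      rw [e, pow_succ, pow_succ]
      push_cast
      nlinarith [pow_pos (show (0:ℝ) < 0.36 by norm_num) (n-2), h]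

/-- For every integer k ≥ 3,
(1 − (0.9^k/(k−1))^{1/(k−2)})^{k−1} < 0.96^k. -/
theorem numerical_inequality :
    ∀ k : ℕ, 3 ≤ k →
      (1 - ((0.9 : ℝ) ^ k / ((k : ℝ) - 1)) ^ ((1 : ℝ) / ((k : ℝ) - 2))) ^ (k - 1) <
        (0.96 : ℝ) ^ k := by
  intro k hk
  have hk3 : (3 : ℝ) ≤ (k : ℝ) := by exact_mod_cast hk
  set x : ℝ := (0.9 : ℝ) ^ k / ((k : ℝ) - 1) with hx
  have hc : (0 : ℝ) < (k : ℝ) - 2 := by linarith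
  have hk1 : (0 : ℝ) < (k : ℝ) - 1 := by linarith
  have hxpos : 0 < x := by
    apply div_pos (pow_pos (by norm_num) k) hk1
  have hxle1 : x ≤ 1 := by
    rw [hx, div_le_one hk1]
    calc (0.9:ℝ)^k ≤ 1 := pow_le_one₀ (by norm_num) (by norm_num)
    _ ≤ (k:ℝ) - 1 := by linarith
  set a : ℝ := x ^ ((1 : ℝ) / ((k : ℝ) - 2)) with ha
  have ha1 : a ≤ 1 := Real.rpow_le_one hxpos.le hxle1 (by positivity)
  -- key: a ≥ 0.36
  have hkey : ((0.36 : ℝ)) ^ (k - 2 : ℕ) ≤ x := by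
    rw [hx, le_div_iff₀ hk1]
    have := aux_pow_ineq k hk
    linarith [this]
  have hcastk : ((k - 2 : ℕ) : ℝ) = (k : ℝ) - 2 := by
    have : (2 : ℕ) ≤ k := by omega
    push_cast [this]
    ring
  have ha36 : (0.36 : ℝ) ≤ a := by
    have h1 : ((0.36 : ℝ) ^ (k - 2 : ℕ)) ^ ((1 : ℝ) / ((k : ℝ) - 2)) ≤ a := by
      rw [ha]
      exact Real.rpow_le_rpow (by positivity) hkey (by positivity)
    have h2 : ((0.36 : ℝ) ^ (k - 2 : ℕ)) ^ ((1 : ℝ) / ((k : ℝ) - 2)) = 0.36 := by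
      rw [← Real.rpow_natCast (0.36 : ℝ) (k - 2), ← Real.rpow_mul (by norm_num),
        hcastk, mul_one_div, div_self hc.ne', Real.rpow_one]
    linarith [h1, h2 ▸ h1]
  have hbase : (1 : ℝ) - a ≤ 0.64 := by linarith
  have hbase0 : (0 : ℝ) ≤ 1 - a := by linarith
  have step1 : (1 - a) ^ (k - 1) ≤ (0.64 : ℝ) ^ (k - 1) :=
    pow_le_pow_left₀ hbase0 hbase _
  have step2 : (0.64 : ℝ) ^ (k - 1) < (0.96 : ℝ) ^ k := by
    have e64 : (0.64 : ℝ) = (2/3) * 0.96 := by norm_num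
    have hk1' : k - 1 = (k - 1) := rfl
    have h23 : ((2:ℝ)/3) ^ (k - 1) ≤ ((2:ℝ)/3) ^ 2 :=
      pow_le_pow_of_le_one (by norm_num) (by norm_num) (by omega)
    have hkk : k = (k - 1) + 1 := by omega
    calc (0.64 : ℝ) ^ (k - 1) = ((2:ℝ)/3) ^ (k-1) * (0.96:ℝ) ^ (k-1) := by
          rw [e64, mul_pow]
      _ ≤ ((2:ℝ)/3) ^ 2 * (0.96:ℝ) ^ (k-1) := by
          apply mul_le_mul_of_nonneg_right h23 (by positivity)
      _ < 0.96 * (0.96:ℝ) ^ (k-1) := by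
          apply mul_lt_mul_of_pos_right (by norm_num) (by positivity)
      _ = (0.96 : ℝ) ^ k := by
          conv_rhs => rw [hkk]
          rw [pow_succ]; ring
  exact lt_of_le_of_lt step1 step2
end
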